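/- Monotonicity of the quantum hockey-stick divergence in γ at γ = 1: let n be a nonempty finite type and ρ, ρ' : Matrix n n ℂ density matrices. For every γ ≥ 1, Re(Tr((ρ - γ • ρ')₊)) ≤ Re(Tr((ρ - ρ')₊)); consequently the λ-Dobrushin bound established for the trace distance D_1^q also bounds D_γ^q for all γ ≥ 1. -/

import Mathlib

open Matrix
open scoped ComplexOrder

/-- The positive part of a matrix, given by the continuous functional calculus
applied to `fun x => max x 0` (for a Hermitian matrix this replaces each
eigenvalue `x` in the spectral decomposition by `max x 0`). -/
noncomputable def matPosPart {n : Type*} [Fintype n] [DecidableEq n]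
    (A : Matrix n n ℂ) : Matrix n n ℂ :=
  cfc (fun x : ℝ => max x 0) A

section helpers

variable {n : Type*} [Fintype n] [DecidableEq n]

lemma cfc_mul_cfc' {A : Matrix n n ℂ} (hA : A.IsHermitian) (f g : ℝ → ℝ) :
    hA.cfc f * hA.cfc g = hA.cfc (fun x => f x * g x) := by
  simp only [Matrix.IsHermitian.cfc, Unitary.conjStarAlgAut_apply, Unitary.coe_star]
  have h1 : (star (hA.eigenvectorUnitary : Matrix n n ℂ)) *
      (hA.eigenvectorUnitary : Matrix n n ℂ) = 1 :=
    Unitary.star_mul_self_of_mem (hA.eigenvectorUnitary).2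
  rw [show ∀ a b c d e f : Matrix n n ℂ, (a*b*c)*(d*e*f) = a*(b*((c*d)*e))*f by
    intros; noncomm_ring, h1, one_mul, diagonal_mul_diagonal]
  congr 2
  funext i j
  by_cases h : i = j <;> simp [Matrix.diagonal_apply, h]

lemma cfc_sub' {A : Matrix n n ℂ} (hA : A.IsHermitian) (f g : ℝ → ℝ) :
    hA.cfc f - hA.cfc g = hA.cfc (fun x => f x - g x) := by
  simp only [Matrix.IsHermitian.cfc, Unitary.conjStarAlgAut_apply, Unitary.coe_star]
  rw [← sub_mul, ← mul_sub, diagonal_sub]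
  congr 2
  funext i j
  by_cases h : i = j <;> simp [Matrix.diagonal_apply, h]

lemma cfc_herm' {A : Matrix n n ℂ} (hA : A.IsHermitian) (f : ℝ → ℝ) :
    (hA.cfc f).IsHermitian := by
  simp only [Matrix.IsHermitian.cfc, Unitary.conjStarAlgAut_apply, Unitary.coe_star, Matrix.IsHermitian, star_eq_conjTranspose] at *
  rw [conjTranspose_mul, conjTranspose_mul, ← star_eq_conjTranspose, ← star_eq_conjTranspose,
    star_star, diagonal_conjTranspose, mul_assoc]
  congr 1
  ext i j
  simp [Pi.star_def]

lemma cfc_psd' {A : Matrix n n ℂ} (hA : A.IsHermitian) (f : ℝ → ℝ) (hf : ∀ x, 0 ≤ f x) :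
    (hA.cfc f).PosSemidef := by
  have hd : PosSemidef (diagonal ((↑) ∘ f ∘ hA.eigenvalues : n → ℂ)) := by
    refine posSemidef_diagonal_iff.mpr fun i => ?_
    simpa using Complex.zero_le_real.mpr (hf _)
  simpa [Matrix.IsHermitian.cfc, star_eq_conjTranspose, mul_assoc] using
    hd.mul_mul_conjTranspose_same (hA.eigenvectorUnitary : Matrix n n ℂ)

lemma psd_trace_re_nonneg {M : Matrix n n ℂ} (hM : M.PosSemidef) : 0 ≤ M.trace.re := by
  have h : ∀ i, 0 ≤ M i i := fun i => by
    simpa [dotProduct, Pi.single_apply, mulVec] using hM.dotProduct_mulVec_nonneg (Pi.single i 1)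
  rw [Matrix.trace, Complex.re_sum]
  exact Finset.sum_nonneg fun i _ => (Complex.le_def.mp (h i)).1

end helpers

set_option maxHeartbeats 1000000 in
/-- Monotonicity of the quantum hockey-stick divergence in `γ` at `γ = 1`:
for density matrices `ρ, ρ'` and every `γ ≥ 1`,
`D_γ^q(ρ‖ρ') ≤ D_1^q(ρ‖ρ')`. -/
theorem quantum_hockeyStick_le_traceDist
    {n : Type*} [Fintype n] [DecidableEq n] [Nonempty n]
    (ρ ρ' : Matrix n n ℂ)
    (hρ : ρ.IsHermitian) (hρpsd : ρ.PosSemidef) (hρtr : ρ.trace = 1)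
    (hρ' : ρ'.IsHermitian) (hρ'psd : ρ'.PosSemidef) (hρ'tr : ρ'.trace = 1) :
    ∀ γ : ℝ, 1 ≤ γ →
      (matPosPart (ρ - γ • ρ')).trace.re ≤ (matPosPart (ρ - ρ')).trace.re := by
  intro γ hγ
  have hsm : (γ • ρ').IsHermitian := by
    have h : (γ • ρ')ᴴ = γ • ρ'ᴴ := by
      ext i j
      simp [conjTranspose_apply, Complex.real_smul]
    rw [Matrix.IsHermitian, h, hρ'.eq]
  have hA : (ρ - γ • ρ').IsHermitian := hρ.sub hsm
  have hB : (ρ - ρ').IsHermitian := hρ.sub hρ'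
  have hApos : matPosPart (ρ - γ • ρ') = hA.cfc (fun x => max x 0) := by
    rw [matPosPart]; exact hA.cfc_eq _
  have hBpos : matPosPart (ρ - ρ') = hB.cfc (fun x => max x 0) := by
    rw [matPosPart]; exact hB.cfc_eq _
  set g : ℝ → ℝ := fun x => if 0 < x then 1 else 0 with hg
  set P : Matrix n n ℂ := hA.cfc g with hPdef
  have hPH : P.IsHermitian := cfc_herm' hA g
  have hP2 : P * P = P := by
    rw [hPdef, cfc_mul_cfc']
    exact congrArg hA.cfc (funext fun x => by by_cases h : 0 < x <;> simp [hg, h])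
  have hAid : hA.cfc (fun x => x) = ρ - γ • ρ' := by
    rw [← hA.cfc_eq]
    exact cfc_id' ℝ (ρ - γ • ρ') hA
  have hPAP : P * (ρ - γ • ρ') * P = hA.cfc (fun x => max x 0) := by
    have e : P * (ρ - γ • ρ') * P = P * hA.cfc (fun x => x) * P := by rw [hAid]
    rw [e, hPdef, cfc_mul_cfc', cfc_mul_cfc']
    refine congrArg hA.cfc (funext fun x => ?_)
    by_cases h : 0 < x
    · simp [hg, h, max_eq_left h.le]
    · simp [hg, h, max_eq_right (le_of_not_gt h)]
  -- positive semidefinite pieces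
  have hBA : ((ρ - ρ') - (ρ - γ • ρ')).PosSemidef := by
    have h1 : (ρ - ρ') - (ρ - γ • ρ') = (γ - 1) • ρ' := by
      rw [sub_smul, one_smul]
      abel
    rw [h1]
    refine Matrix.PosSemidef.of_dotProduct_mulVec_nonneg ?_ fun x => ?_
    · have h : ((γ - 1) • ρ')ᴴ = (γ - 1) • ρ'ᴴ := by
        ext i j
        simp [conjTranspose_apply, Complex.real_smul]
      show ((γ - 1) • ρ')ᴴ = (γ - 1) • ρ'
      rw [h, hρ'.eq]
    · rw [smul_mulVec, dotProduct_smul]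
      exact smul_nonneg (by linarith) (hρ'psd.dotProduct_mulVec_nonneg x)
  have hT1 : (P * ((ρ - ρ') - (ρ - γ • ρ')) * P).PosSemidef := by
    have h := hBA.mul_mul_conjTranspose_same P
    rwa [hPH.eq] at h
  have hBid : hB.cfc (fun x => x) = ρ - ρ' := by
    rw [← hB.cfc_eq]
    exact cfc_id' ℝ (ρ - ρ') hB
  have hBsub : (hB.cfc (fun x => max x 0) - (ρ - ρ')).PosSemidef := by
    have e1 : hB.cfc (fun x => max x 0) - (ρ - ρ')
        = hB.cfc (fun x => max x 0) - hB.cfc (fun x => x) := by rw [hBid]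
    rw [e1, cfc_sub']
    exact cfc_psd' hB _ fun x => by simp [sub_nonneg, le_max_left]
  have hT2 : (P * (hB.cfc (fun x => max x 0) - (ρ - ρ')) * P).PosSemidef := by
    have h := hBsub.mul_mul_conjTranspose_same P
    rwa [hPH.eq] at h
  have hBfpsd : (hB.cfc (fun x => max x 0)).PosSemidef :=
    cfc_psd' hB _ fun x => le_max_right x 0
  set Q : Matrix n n ℂ := 1 - P with hQdef
  have hQH : Qᴴ = Q := by
    rw [hQdef, conjTranspose_sub, conjTranspose_one, hPH.eq]
  have hQ2 : Q * Q = Q := by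
    simp [hQdef, mul_sub, sub_mul, hP2]
  have hT3 : (Q * hB.cfc (fun x => max x 0) * Q).PosSemidef := by
    have h := hBfpsd.mul_mul_conjTranspose_same Q
    rwa [hQH] at h
  -- trace identities
  have tr1 : (P * ((ρ - ρ') - (ρ - γ • ρ')) * P).trace
      = (P * (ρ - ρ') * P).trace - (hA.cfc (fun x => max x 0)).trace := by
    rw [mul_sub, sub_mul, trace_sub, hPAP]
  have tr2 : (P * (hB.cfc (fun x => max x 0) - (ρ - ρ')) * P).trace
      = (P * hB.cfc (fun x => max x 0)).trace - (P * (ρ - ρ') * P).trace := by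
    rw [mul_sub, sub_mul, trace_sub]
    rw [trace_mul_cycle P (hB.cfc (fun x => max x 0)) P, hP2]
  have tr3 : (Q * hB.cfc (fun x => max x 0) * Q).trace
      = (hB.cfc (fun x => max x 0)).trace - (P * hB.cfc (fun x => max x 0)).trace := by
    rw [trace_mul_cycle Q (hB.cfc (fun x => max x 0)) Q, hQ2, hQdef, sub_mul, one_mul,
      trace_sub]
  have hsum : (hB.cfc (fun x => max x 0)).trace
      = (hA.cfc (fun x => max x 0)).trace
        + ((P * ((ρ - ρ') - (ρ - γ • ρ')) * P).trace
          + (P * (hB.cfc (fun x => max x 0) - (ρ - ρ')) * P).trace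
          + (Q * hB.cfc (fun x => max x 0) * Q).trace) := by
    rw [tr1, tr2, tr3]
    ring
  have r1 := psd_trace_re_nonneg hT1
  have r2 := psd_trace_re_nonneg hT2
  have r3 := psd_trace_re_nonneg hT3
  have hre := congrArg Complex.re hsum
  simp only [Complex.add_re] at hre
  rw [hApos, hBpos]
  linarith
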